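/- Fix K ≥ 1, z ∈ [0,1), p, q ≥ 0 with p + q + z = 1 and q < p, and σ² > 0. The function γ ↦ P_err(γ) = ∑_{n=0}^{K} [(n·q/(1−z) + σ²/(2γ))/(n + σ²/γ)] C(K,n) z^{K−n}(1−z)^n is strictly decreasing on (0, ∞): if a > 1 then P_err(γa) < P_err(γ). -/

import Mathlib

/-- The error probability of Lemma 2 as a function of the power factor `γ`. -/
noncomputable def perr (K : ℕ) (σ2 γ q z : ℝ) : ℝ :=
  ∑ n ∈ Finset.range (K + 1),
    (((n : ℝ) * (q / (1 - z)) + σ2 / (2 * γ)) / (n + σ2 / γ))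
      * (K.choose n) * z ^ (K - n) * (1 - z) ^ n

lemma frac_le (s γ γ' c : ℝ) (hs : 0 < s) (hγ : 0 < γ) (hle : γ ≤ γ')
    (hc : 0 ≤ c) (hc2 : c ≤ 1/2) (n : ℕ) :
    ((n : ℝ) * c + s / (2 * γ')) / (n + s / γ') ≤ ((n : ℝ) * c + s / (2 * γ)) / (n + s / γ) := by
  have hγ' : 0 < γ' := lt_of_lt_of_le hγ hle
  have hn : (0:ℝ) ≤ n := Nat.cast_nonneg n
  have hd1 : (0:ℝ) < n + s / γ' := by positivity
  have hd2 : (0:ℝ) < n + s / γ := by positivity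
  rw [div_le_div_iff₀ hd1 hd2]
  have h1 : s / γ' ≤ s / γ := by
    apply div_le_div_of_nonneg_left hs.le hγ hle
  field_simp
  nlinarith [mul_pos hγ hγ', sq_nonneg (γ' - γ), mul_nonneg hn (mul_nonneg hs.le (sub_nonneg.2 hle)),
    mul_nonneg (mul_nonneg hn (mul_nonneg hs.le (sub_nonneg.2 hle))) (sub_nonneg.2 hc2)]

lemma frac_lt (s γ γ' c : ℝ) (hs : 0 < s) (hγ : 0 < γ) (hlt : γ < γ')
    (hc : 0 ≤ c) (hc2 : c < 1/2) (n : ℕ) (hn1 : 1 ≤ n) :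
    ((n : ℝ) * c + s / (2 * γ')) / (n + s / γ') < ((n : ℝ) * c + s / (2 * γ)) / (n + s / γ) := by
  have hγ' : 0 < γ' := lt_trans hγ hlt
  have hn : (1:ℝ) ≤ n := by exact_mod_cast hn1
  have hd1 : (0:ℝ) < n + s / γ' := by positivity
  have hd2 : (0:ℝ) < n + s / γ := by positivity
  rw [div_lt_div_iff₀ hd1 hd2]
  field_simp
  nlinarith [mul_pos hγ hγ', mul_pos (mul_pos hs (sub_pos.2 hlt)) (sub_pos.2 hc2),
    mul_lt_mul_of_pos_left (mul_pos (mul_pos hs (sub_pos.2 hlt)) (sub_pos.2 hc2)) (lt_of_lt_of_le one_pos hn)]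

/-- Better power control (larger `γ`) strictly decreases the error probability. -/
theorem stmt11 (K : ℕ) (hK : 1 ≤ K) (σ2 γ p q z a : ℝ) (hσ : 0 < σ2) (hγ : 0 < γ)
    (hp : 0 ≤ p) (hq : 0 ≤ q) (hz0 : 0 ≤ z) (hz1 : z < 1)
    (hsum : p + q + z = 1) (hqp : q < p) (ha : 1 < a) :
    perr K σ2 (γ * a) q z < perr K σ2 γ q z := by
  have hz : (0:ℝ) < 1 - z := by linarith
  have hc : 0 ≤ q / (1 - z) := div_nonneg hq hz.le
  have hc2 : q / (1 - z) < 1/2 := by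
    rw [div_lt_iff₀ hz]; linarith
  have hlt : γ < γ * a := by nlinarith
  unfold perr
  apply Finset.sum_lt_sum
  · intro i _
    have h := frac_le σ2 γ (γ * a) (q / (1 - z)) hσ hγ hlt.le hc hc2.le i
    have hw : (0:ℝ) ≤ (K.choose i : ℝ) * z ^ (K - i) * (1 - z) ^ i := by positivity
    calc ((i : ℝ) * (q / (1 - z)) + σ2 / (2 * (γ * a))) / (i + σ2 / (γ * a))
          * (K.choose i) * z ^ (K - i) * (1 - z) ^ i
        = ((i : ℝ) * (q / (1 - z)) + σ2 / (2 * (γ * a))) / (i + σ2 / (γ * a))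
          * ((K.choose i) * z ^ (K - i) * (1 - z) ^ i) := by ring
      _ ≤ ((i : ℝ) * (q / (1 - z)) + σ2 / (2 * γ)) / (i + σ2 / γ)
          * ((K.choose i) * z ^ (K - i) * (1 - z) ^ i) := by
          exact mul_le_mul_of_nonneg_right h hw
      _ = ((i : ℝ) * (q / (1 - z)) + σ2 / (2 * γ)) / (i + σ2 / γ)
          * (K.choose i) * z ^ (K - i) * (1 - z) ^ i := by ring
  · refine ⟨K, Finset.self_mem_range_succ K, ?_⟩
    have h := frac_lt σ2 γ (γ * a) (q / (1 - z)) hσ hγ hlt hc hc2 K hK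
    have hw : (0:ℝ) < (K.choose K : ℝ) * z ^ (K - K) * (1 - z) ^ K := by
      simp [Nat.choose_self]; positivity
    calc ((K : ℝ) * (q / (1 - z)) + σ2 / (2 * (γ * a))) / (K + σ2 / (γ * a))
          * (K.choose K) * z ^ (K - K) * (1 - z) ^ K
        = ((K : ℝ) * (q / (1 - z)) + σ2 / (2 * (γ * a))) / (K + σ2 / (γ * a))
          * ((K.choose K) * z ^ (K - K) * (1 - z) ^ K) := by ring
      _ < ((K : ℝ) * (q / (1 - z)) + σ2 / (2 * γ)) / (K + σ2 / γ)
          * ((K.choose K) * z ^ (K - K) * (1 - z) ^ K) :=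
          mul_lt_mul_of_pos_right h hw
      _ = ((K : ℝ) * (q / (1 - z)) + σ2 / (2 * γ)) / (K + σ2 / γ)
          * (K.choose K) * z ^ (K - K) * (1 - z) ^ K := by ring
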